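/- Fix an integer n ≥ 1 and a multiplier λ, and suppose i is an index with i + 1 < m and φ(i,λ) ≥ φ(i+1,λ). Consider the feasible set of vectors x : Fin m → ℝ that are monotone nondecreasing, satisfy 0 ≤ x j ≤ 1 for all j, and satisfy n · ∑ j, q j · x j ≤ 1. Then there exists a maximizer x of ∑ j, q j · φ(j,λ) · x j over this feasible set with x i = x (i+1). -/

import Mathlib

open Finset

/-- A multiplier matrix: nonnegative, lower-triangular (`lam k j = 0` whenever `j > k`),
with each row `k` summing to `1` over `j ≤ k`. -/
def IsMultiplier {m : ℕ} (lam : Fin m → Fin m → ℝ) : Prop :=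
  (∀ k j, 0 ≤ lam k j) ∧ (∀ k j : Fin m, k < j → lam k j = 0) ∧
  (∀ k, ∑ j ∈ Finset.Iic k, lam k j = 1)

/-- The virtual value `φ(i, λ) = v i − (1 / q i) · ∑_{k ≥ i} q k (v k − v i) λ k i`. -/
noncomputable def phi {m : ℕ} (v q : Fin m → ℝ) (lam : Fin m → Fin m → ℝ) (i : Fin m) : ℝ :=
  v i - (1 / q i) * ∑ k ∈ Finset.Ici i, q k * (v k - v i) * lam k i

/-- If `φ(i, λ) ≥ φ(i+1, λ)` then the maximization of `∑ j, q j · φ(j,λ) · x j` over vectors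
`x` that are monotone, `[0,1]`-valued and satisfy `n · ∑ j, q j · x j ≤ 1` admits a maximizer
with `x i = x (i+1)`. -/
theorem exists_maximizer_eq_of_phi_ge (m : ℕ) (hm : 1 ≤ m) (v q : Fin m → ℝ)
    (hv0 : ∀ i, 0 ≤ v i) (hvmono : ∀ i j : Fin m, i < j → v i < v j)
    (hq : ∀ i, 0 < q i) (hqsum : ∑ i, q i = 1)
    (n : ℕ) (hn : 1 ≤ n)
    (lam : Fin m → Fin m → ℝ) (hlam : IsMultiplier lam)
    (i : Fin m) (hi : (i : ℕ) + 1 < m)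
    (hphi : phi v q lam ⟨(i : ℕ) + 1, hi⟩ ≤ phi v q lam i) :
    ∃ x : Fin m → ℝ,
      (Monotone x ∧ (∀ j, 0 ≤ x j ∧ x j ≤ 1) ∧ (n : ℝ) * ∑ j, q j * x j ≤ 1) ∧
      (∀ x' : Fin m → ℝ,
        (Monotone x' ∧ (∀ j, 0 ≤ x' j ∧ x' j ≤ 1) ∧ (n : ℝ) * ∑ j, q j * x' j ≤ 1) →
        ∑ j, q j * phi v q lam j * x' j ≤ ∑ j, q j * phi v q lam j * x j) ∧
      x i = x ⟨(i : ℕ) + 1, hi⟩ := by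
  classical
  set φ := phi v q lam with hφdef
  set i1 : Fin m := ⟨(i : ℕ) + 1, hi⟩ with hi1def
  have hii1 : i < i1 := by
    rw [Fin.lt_def]; simp [hi1def]
  have hne : i ≠ i1 := ne_of_lt hii1
  set S : Set (Fin m → ℝ) :=
    {x | Monotone x ∧ (∀ j, 0 ≤ x j ∧ x j ≤ 1) ∧ (n : ℝ) * ∑ j, q j * x j ≤ 1} with hSdef
  set f : (Fin m → ℝ) → ℝ := fun x => ∑ j, q j * φ j * x j with hfdef
  -- continuity of the objective
  have hconts : Continuous f := by
    apply continuous_finset_sum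
    intro j _
    exact continuous_const.mul (continuous_apply j)
  -- the feasible set is closed
  have hclosed : IsClosed S := by
    have h1 : IsClosed {x : Fin m → ℝ | Monotone x} := by
      have he : {x : Fin m → ℝ | Monotone x} =
          ⋂ (p : Fin m × Fin m), ⋂ (_ : p.1 ≤ p.2), {x | x p.1 ≤ x p.2} := by
        ext x
        simp only [Set.mem_iInter, Set.mem_setOf_eq]
        exact ⟨fun h p hp => h hp, fun h a b hab => h (a, b) hab⟩
      rw [he]
      exact isClosed_iInter fun p => isClosed_iInter fun _ =>
        isClosed_le (continuous_apply _) (continuous_apply _)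
    have h2 : IsClosed {x : Fin m → ℝ | ∀ j, 0 ≤ x j ∧ x j ≤ 1} := by
      have he : {x : Fin m → ℝ | ∀ j, 0 ≤ x j ∧ x j ≤ 1} =
          ⋂ j, (fun x : Fin m → ℝ => x j) ⁻¹' Set.Icc 0 1 := by
        ext x
        simp [Set.mem_iInter, Set.mem_Icc]
      rw [he]
      exact isClosed_iInter fun j => isClosed_Icc.preimage (continuous_apply j)
    have h3 : IsClosed {x : Fin m → ℝ | (n : ℝ) * ∑ j, q j * x j ≤ 1} := by
      apply isClosed_le _ continuous_const
      exact continuous_const.mul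
        (continuous_finset_sum _ fun j _ => continuous_const.mul (continuous_apply j))
    exact h1.inter (h2.inter h3)
  -- the feasible set is compact
  have hsub : S ⊆ Set.Icc (0 : Fin m → ℝ) 1 := by
    intro x hx
    exact ⟨fun j => (hx.2.1 j).1, fun j => (hx.2.1 j).2⟩
  have hcomp : IsCompact S := IsCompact.of_isClosed_subset isCompact_Icc hclosed hsub
  have h0S : (0 : Fin m → ℝ) ∈ S := by
    refine ⟨monotone_const, fun j => ⟨le_rfl, zero_le_one⟩, ?_⟩
    simp
  obtain ⟨x, hxS, hxmax⟩ := hcomp.exists_isMaxOn ⟨0, h0S⟩ hconts.continuousOn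
  -- construct the averaged point
  set a := x i with hadef
  set b := x i1 with hbdef
  have hab : a ≤ b := hxS.1 (le_of_lt hii1)
  have hQ : 0 < q i + q i1 := add_pos (hq i) (hq i1)
  set t : ℝ := (q i * a + q i1 * b) / (q i + q i1) with htdef
  have hQt : (q i + q i1) * t = q i * a + q i1 * b := by
    rw [htdef]; field_simp [hQ.ne']
  have hat : a ≤ t := by
    rw [htdef, le_div_iff₀ hQ]
    nlinarith [hq i1, hab]
  have htb : t ≤ b := by
    rw [htdef, div_le_iff₀ hQ]
    nlinarith [hq i, hab]
  have hzero : q i * (t - a) + q i1 * (t - b) = 0 := by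
    linear_combination hQt
  set y : Fin m → ℝ := fun j => if j = i then t else if j = i1 then t else x j with hydef
  have hyi : y i = t := by simp [hydef]
  have hyi1 : y i1 = t := by simp [hydef, hne.symm]
  have hyother : ∀ j, j ≠ i → j ≠ i1 → y j = x j := by
    intro j h1 h2; simp [hydef, h1, h2]
  -- helper inequalities
  have hxt : ∀ j, j ≤ i → x j ≤ t := fun j h => le_trans (hxS.1 h) hat
  have htx : ∀ k, i1 ≤ k → t ≤ x k := fun k h => le_trans htb (hxS.1 h)
  -- monotone
  have hymono : Monotone y := by
    intro j k hjk
    by_cases hji : j = i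
    · have hyj : y j = t := by simp [hydef, hji]
      rw [hyj]
      by_cases hki : k = i
      · have hyk : y k = t := by simp [hydef, hki]
        rw [hyk]
      · by_cases hki1 : k = i1
        · have hyk : y k = t := by simp [hydef, hki, hki1]
          rw [hyk]
        · rw [hyother k hki hki1]
          refine htx k ?_
          have h1 : (i : ℕ) ≤ (k : ℕ) := by
            rw [← hji]; exact hjk
          have h2 : (k : ℕ) ≠ (i : ℕ) := fun h => hki (Fin.ext h)
          rw [Fin.le_def]
          simp only [hi1def]
          omega
    · by_cases hji1 : j = i1
      · have hyj : y j = t := by simp [hydef, hji, hji1]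
        rw [hyj]
        have hjk' : i1 ≤ k := hji1 ▸ hjk
        by_cases hki : k = i
        · exfalso
          rw [hki] at hjk'
          exact absurd (lt_of_lt_of_le hii1 hjk') (lt_irrefl i)
        · by_cases hki1 : k = i1
          · have hyk : y k = t := by simp [hydef, hki, hki1]
            rw [hyk]
          · rw [hyother k hki hki1]
            exact htx k hjk'
      · rw [hyother j hji hji1]
        by_cases hki : k = i
        · have hyk : y k = t := by simp [hydef, hki]
          rw [hyk]
          exact hxt j (hki ▸ hjk)
        · by_cases hki1 : k = i1
          · have hyk : y k = t := by simp [hydef, hki, hki1]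
            rw [hyk]
            refine hxt j ?_
            have h1 : (j : ℕ) ≤ (i1 : ℕ) := hki1 ▸ hjk
            have h2 : (j : ℕ) ≠ (i1 : ℕ) := fun h => hji1 (Fin.ext h)
            rw [Fin.le_def]
            simp only [hi1def] at h1 h2 ⊢
            omega
          · rw [hyother k hki hki1]
            exact hxS.1 hjk
  -- bounds
  have hybounds : ∀ j, 0 ≤ y j ∧ y j ≤ 1 := by
    intro j
    by_cases hji : j = i
    · have hyj : y j = t := by simp [hydef, hji]
      rw [hyj]
      exact ⟨le_trans (hxS.2.1 i).1 hat, le_trans htb (hxS.2.1 i1).2⟩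
    · by_cases hji1 : j = i1
      · have hyj : y j = t := by simp [hydef, hji, hji1]
        rw [hyj]
        exact ⟨le_trans (hxS.2.1 i).1 hat, le_trans htb (hxS.2.1 i1).2⟩
      · rw [hyother j hji hji1]; exact hxS.2.1 j
  -- sum identity
  have hsum : ∀ g : Fin m → ℝ,
      ∑ j, g j * y j = ∑ j, g j * x j + (g i * (t - a) + g i1 * (t - b)) := by
    intro g
    have hsubset : ({i, i1} : Finset (Fin m)) ⊆ univ := subset_univ _
    have h1 : ∑ j, g j * y j
        = ∑ j ∈ univ \ {i, i1}, g j * y j + ∑ j ∈ ({i, i1} : Finset (Fin m)), g j * y j :=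
      (Finset.sum_sdiff hsubset).symm
    have h2 : ∑ j, g j * x j
        = ∑ j ∈ univ \ {i, i1}, g j * x j + ∑ j ∈ ({i, i1} : Finset (Fin m)), g j * x j :=
      (Finset.sum_sdiff hsubset).symm
    have h3 : ∑ j ∈ univ \ {i, i1}, g j * y j = ∑ j ∈ univ \ {i, i1}, g j * x j := by
      refine Finset.sum_congr rfl fun j hj => ?_
      simp only [mem_sdiff, mem_insert, mem_singleton] at hj
      push_neg at hj
      rw [hyother j hj.2.1 hj.2.2]
    have h4 : ∑ j ∈ ({i, i1} : Finset (Fin m)), g j * y j = g i * t + g i1 * t := by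
      rw [Finset.sum_pair hne, hyi, hyi1]
    have h5 : ∑ j ∈ ({i, i1} : Finset (Fin m)), g j * x j = g i * a + g i1 * b := by
      rw [Finset.sum_pair hne]
    rw [h1, h2, h3, h4, h5]
    ring
  -- constraint
  have hycon : (n : ℝ) * ∑ j, q j * y j ≤ 1 := by
    have := hsum q
    rw [this, hzero, add_zero]
    exact hxS.2.2
  have hyS : y ∈ S := ⟨hymono, hybounds, hycon⟩
  -- objective does not decrease
  have hfy : f x ≤ f y := by
    have hs := hsum (fun j => q j * φ j)
    have heq : q i * φ i * (t - a) + q i1 * φ i1 * (t - b)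
        = (φ i - φ i1) * (q i * (t - a)) := by
      linear_combination φ i1 * hzero
    have hc0 : 0 ≤ q i * (t - a) := mul_nonneg (hq i).le (by linarith)
    have hphi' : φ i1 ≤ φ i := hphi
    have hnn : 0 ≤ (φ i - φ i1) * (q i * (t - a)) :=
      mul_nonneg (by linarith) hc0
    calc f x ≤ f x + ((fun j => q j * φ j) i * (t - a) + (fun j => q j * φ j) i1 * (t - b)) := by
          simp only
          rw [heq]
          linarith
      _ = f y := (hs).symm
  refine ⟨y, hyS, fun x' hx' => le_trans (hxmax hx') hfy, ?_⟩
  rw [hyi, hyi1]
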